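/- The spectral radius of the two-dimensional Wasserstein metric matrix Q = Q_{[2]} ⊗ Q_{[1]} satisfies ρ(Q) ≥ (1+λ_1)(1+λ_2), for n, m ≥ 2. -/

import Mathlib

open Matrix
open scoped Kronecker
open scoped InnerProductSpace
open scoped ENNReal NNReal

lemma rayleigh_exists_eig {N : Type*} [Fintype N] [DecidableEq N]
    {A : Matrix N N ℝ} (hA : A.IsHermitian) {v : N → ℝ} {c : ℝ}
    (hv : 0 < v ⬝ᵥ v) (hle : c * (v ⬝ᵥ v) ≤ v ⬝ᵥ (A *ᵥ v)) :
    ∃ μ ∈ spectrum ℝ A, c ≤ μ := by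
  by_contra h
  push_neg at h
  have hlt : ∀ i, hA.eigenvalues i < c := fun i =>
    h _ (hA.eigenvalues_mem_spectrum_real i)
  set b := hA.eigenvectorBasis with hb
  set v' : EuclideanSpace ℝ N := (WithLp.equiv 2 (N → ℝ)).symm v with hv'
  set w : N → ℝ := fun i => b.repr v' i with hw
  have h1 : v ⬝ᵥ v = ∑ i, w i * w i := by
    have := b.repr.inner_map_map v' v'
    simp only [PiLp.inner_apply, RCLike.inner_apply, starRingEnd_apply, star_trivial] at this
    exact this.symm
  have hrepr : ∀ i, b.repr ((WithLp.equiv 2 (N → ℝ)).symm (A *ᵥ v)) i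
      = hA.eigenvalues i * w i := by
    intro i
    have hsym := (isHermitian_iff_isSymmetric.1 hA)
    have h2 : ⟪(b i : EuclideanSpace ℝ N), (WithLp.equiv 2 (N → ℝ)).symm (A *ᵥ v)⟫_ℝ
        = hA.eigenvalues i * ⟪(b i : EuclideanSpace ℝ N), v'⟫_ℝ := by
      have h3 := hsym (b i) v'
      rw [toEuclideanLin_apply, toEuclideanLin_apply] at h3
      simp only [hv', WithLp.equiv_symm_apply, WithLp.ofLp_toLp] at h3
      rw [WithLp.equiv_symm_apply, ← h3]
      have hmv : A *ᵥ (WithLp.equiv 2 (N → ℝ)) (b i) = hA.eigenvalues i • ⇑(b i) :=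
        hA.mulVec_eigenvectorBasis i
      erw [hmv]
      simp only [WithLp.equiv, Equiv.refl_apply, Equiv.refl_symm, PiLp.inner_apply,
        RCLike.inner_apply, starRingEnd_apply, star_trivial, Pi.smul_apply, smul_eq_mul,
        Finset.mul_sum, hv']
      refine Finset.sum_congr rfl fun x _ => ?_
      show v x * (hA.eigenvalues i * (b i).ofLp x) = hA.eigenvalues i * (v x * (b i).ofLp x)
      ring
    rw [b.repr_apply_apply, h2, ← b.repr_apply_apply]
  have h2 : v ⬝ᵥ (A *ᵥ v) = ∑ i, hA.eigenvalues i * (w i * w i) := by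
    have := b.repr.inner_map_map v' ((WithLp.equiv 2 (N → ℝ)).symm (A *ᵥ v))
    simp only [PiLp.inner_apply, RCLike.inner_apply, starRingEnd_apply, star_trivial,
      hrepr] at this
    simp only [hv', WithLp.equiv_symm_apply, WithLp.ofLp_toLp] at this
    rw [dotProduct, Finset.sum_congr rfl (fun x _ => mul_comm (v x) ((A *ᵥ v) x)), ← this]
    apply Finset.sum_congr rfl
    intro i _
    show hA.eigenvalues i * w i * w i = hA.eigenvalues i * (w i * w i)
    ring
  have hwne : ∃ i, w i ≠ 0 := by
    by_contra hz
    push_neg at hz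
    rw [h1] at hv
    simp [hz] at hv
  obtain ⟨i0, hi0⟩ := hwne
  have hstrict : ∑ i, hA.eigenvalues i * (w i * w i) < ∑ i, c * (w i * w i) := by
    apply Finset.sum_lt_sum
    · intro i _
      exact mul_le_mul_of_nonneg_right (hlt i).le (mul_self_nonneg _)
    · exact ⟨i0, Finset.mem_univ _, by
        apply mul_lt_mul_of_pos_right (hlt i0)
        exact mul_self_pos.mpr hi0⟩
  rw [h2] at hle
  rw [h1, Finset.mul_sum] at hle
  exact absurd (lt_of_le_of_lt hle hstrict) (lt_irrefl _)

lemma kron_dot {α β : Type*} [Fintype α] [Fintype β]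
    (A : Matrix α α ℝ) (B : Matrix β β ℝ) (x : α → ℝ) (y : β → ℝ) :
    (fun p : α × β => x p.1 * y p.2) ⬝ᵥ ((A ⊗ₖ B) *ᵥ fun p : α × β => x p.1 * y p.2)
      = (x ⬝ᵥ (A *ᵥ x)) * (y ⬝ᵥ (B *ᵥ y)) := by
  simp only [dotProduct, mulVec, kroneckerMap_apply, Fintype.sum_prod_type]
  rw [Finset.sum_mul_sum]
  refine Finset.sum_congr rfl fun i _ => ?_
  refine Finset.sum_congr rfl fun j _ => ?_
  have h : (∑ k, A i k * x k) * (∑ l, B j l * y l)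
      = ∑ k, ∑ l, (A i k * x k) * (B j l * y l) := Finset.sum_mul_sum _ _ _ _
  calc x i * y j * (∑ k, ∑ l, A i k * B j l * (x k * y l))
      = x i * y j * (∑ k, ∑ l, (A i k * x k) * (B j l * y l)) := by
        congr 1
        exact Finset.sum_congr rfl fun k _ => Finset.sum_congr rfl fun l _ => by ring
    _ = x i * y j * ((∑ k, A i k * x k) * (∑ l, B j l * y l)) := by rw [h]
    _ = (x i * ∑ k, A i k * x k) * (y j * ∑ l, B j l * y l) := by ring

lemma prod_dot {α β : Type*} [Fintype α] [Fintype β] (x : α → ℝ) (y : β → ℝ) :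
    (fun p : α × β => x p.1 * y p.2) ⬝ᵥ (fun p : α × β => x p.1 * y p.2)
      = (x ⬝ᵥ x) * (y ⬝ᵥ y) := by
  simp only [dotProduct, Fintype.sum_prod_type]
  rw [Finset.sum_mul_sum]
  exact Finset.sum_congr rfl fun i _ => Finset.sum_congr rfl fun j _ => by ring

lemma indic_quad {k : ℕ} (hk : 2 ≤ k) (l : ℝ)
    (M : Matrix (Fin k) (Fin k) ℝ)
    (hM : ∀ i j : Fin k, M i j = l ^ (Nat.dist (i : ℕ) (j : ℕ))) :
    (Pi.single (⟨0, by omega⟩ : Fin k) (1:ℝ) + Pi.single (⟨1, by omega⟩ : Fin k) (1:ℝ)) ⬝ᵥ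
      (M *ᵥ (Pi.single (⟨0, by omega⟩ : Fin k) (1:ℝ) + Pi.single (⟨1, by omega⟩ : Fin k) (1:ℝ)))
      = 2 * (1 + l) := by
  set i0 : Fin k := ⟨0, by omega⟩
  set i1 : Fin k := ⟨1, by omega⟩
  rw [mulVec_add, mulVec_single, mulVec_single, dotProduct_add, add_dotProduct,
    add_dotProduct]
  simp only [single_dotProduct, Pi.add_apply, one_mul, mul_one]
  have d00 : M i0 i0 = 1 := by rw [hM]; simp [i0]
  have d01 : M i0 i1 = l := by rw [hM]; simp [i0, i1, Nat.dist]
  have d10 : M i1 i0 = l := by rw [hM]; simp [i0, i1, Nat.dist]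
  have d11 : M i1 i1 = 1 := by rw [hM]; simp [i1]
  simp only [MulOpposite.op_one, one_smul, col_apply]
  rw [d00, d01, d10, d11]
  ring

lemma indic_norm {k : ℕ} (hk : 2 ≤ k) :
    (Pi.single (⟨0, by omega⟩ : Fin k) (1:ℝ) + Pi.single (⟨1, by omega⟩ : Fin k) (1:ℝ)) ⬝ᵥ
      (Pi.single (⟨0, by omega⟩ : Fin k) (1:ℝ) + Pi.single (⟨1, by omega⟩ : Fin k) (1:ℝ)) = (2:ℝ) := by
  set i0 : Fin k := ⟨0, by omega⟩
  set i1 : Fin k := ⟨1, by omega⟩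
  have hne : i0 ≠ i1 := by simp [i0, i1, Fin.ext_iff]
  rw [dotProduct_add, add_dotProduct, add_dotProduct]
  simp only [single_dotProduct, Pi.add_apply, one_mul]
  rw [Pi.single_eq_same, Pi.single_eq_same, Pi.single_eq_of_ne hne,
    Pi.single_eq_of_ne (Ne.symm hne)]
  ring

/-- The spectral radius of `Q = Q₂ ⊗ Q₁` is at least `(1+λ₁)(1+λ₂)` for `n, m ≥ 2`. -/
theorem wasserstein_2d_spectralRadius_lower (n m : ℕ) (hn : 2 ≤ n) (hm : 2 ≤ m)
    (l1 l2 : ℝ) (hl1 : l1 ∈ Set.Ioo (0:ℝ) 1) (hl2 : l2 ∈ Set.Ioo (0:ℝ) 1)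
    (Q1 : Matrix (Fin n) (Fin n) ℝ)
    (hQ1 : ∀ i j : Fin n, Q1 i j = l1 ^ (Nat.dist (i : ℕ) (j : ℕ)))
    (Q2 : Matrix (Fin m) (Fin m) ℝ)
    (hQ2 : ∀ i j : Fin m, Q2 i j = l2 ^ (Nat.dist (i : ℕ) (j : ℕ))) :
    ENNReal.ofReal ((1 + l1) * (1 + l2)) ≤ spectralRadius ℝ (Q2 ⊗ₖ Q1) := by
  obtain ⟨hl1p, hl1u⟩ := hl1
  obtain ⟨hl2p, hl2u⟩ := hl2
  -- Hermitian
  have hH : (Q2 ⊗ₖ Q1).IsHermitian := by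
    ext ⟨i, j⟩ ⟨k, l⟩
    simp only [conjTranspose_apply, kroneckerMap_apply, star_trivial, hQ1, hQ2]
    rw [Nat.dist_comm (k : ℕ) i, Nat.dist_comm (l : ℕ) j]
  -- test vectors
  set x : Fin m → ℝ := Pi.single (⟨0, by omega⟩ : Fin m) 1 + Pi.single (⟨1, by omega⟩ : Fin m) 1
    with hx
  set y : Fin n → ℝ := Pi.single (⟨0, by omega⟩ : Fin n) 1 + Pi.single (⟨1, by omega⟩ : Fin n) 1
    with hy
  set v : Fin m × Fin n → ℝ := fun p => x p.1 * y p.2 with hv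
  have hvv : v ⬝ᵥ v = 4 := by
    rw [hv, prod_dot, indic_norm hm, indic_norm hn]; norm_num
  have hvAv : v ⬝ᵥ ((Q2 ⊗ₖ Q1) *ᵥ v) = (2 * (1 + l2)) * (2 * (1 + l1)) := by
    rw [hv, kron_dot, indic_quad hm l2 Q2 hQ2, indic_quad hn l1 Q1 hQ1]
  set c : ℝ := (1 + l1) * (1 + l2) with hc
  have hcpos : 0 < c := by nlinarith
  have hv4 : (0:ℝ) < v ⬝ᵥ v := by rw [hvv]; norm_num
  have hle : c * (v ⬝ᵥ v) ≤ v ⬝ᵥ ((Q2 ⊗ₖ Q1) *ᵥ v) := by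
    rw [hvv, hvAv, hc]; nlinarith [sq_nonneg l1]
  obtain ⟨μ, hμ, hcμ⟩ := rayleigh_exists_eig hH hv4 hle
  have h1 : ENNReal.ofReal c ≤ (‖μ‖₊ : ℝ≥0∞) := by
    rw [← enorm_eq_nnnorm, Real.enorm_eq_ofReal (le_trans hcpos.le hcμ)]
    exact ENNReal.ofReal_le_ofReal hcμ
  refine le_trans h1 ?_
  rw [spectralRadius]
  exact le_iSup₂ (f := fun k (_ : k ∈ spectrum ℝ (Q2 ⊗ₖ Q1)) => (‖k‖₊ : ℝ≥0∞)) μ hμ
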